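/- Let C1 and C2 be linear codes of length n over F_q forming a linear complementary pair (i.e., C1 ∩ C2 = {0} and C1 + C2 = F_q^n), with dimensions k1 and k2. Then for any generator matrix G1 of C1 and parity-check matrix H2 of C2, the matrix G1 · H2^t has rank k1 (equivalently, since k1 = n − k2, G1 · H2^t is an invertible square matrix). -/

import Mathlib

open Matrix

variable {F : Type*} [Field F] [Fintype F]

/-- The Euclidean dual of a linear code `C ⊆ F^n`. -/
def dualCode {n : ℕ} (C : Submodule F (Fin n → F)) : Submodule F (Fin n → F) where
  carrier := {u | ∀ c ∈ C, dotProduct u c = 0}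
  add_mem' := by
    intro a b ha hb c hc
    simp [add_dotProduct, ha c hc, hb c hc]
  zero_mem' := by
    intro c hc
    simp
  smul_mem' := by
    intro r a ha c hc
    simp [smul_dotProduct, ha c hc]

/-- `G` is a generator matrix of the code `C`: its rows form a basis of `C`. -/
def IsGenMat {n k : ℕ} (C : Submodule F (Fin n → F)) (G : Matrix (Fin k) (Fin n) F) : Prop :=
  LinearIndependent F (fun i => G i) ∧ Submodule.span F (Set.range fun i => G i) = C

/-- The dot product bilinear form on `Fin n → F`. -/
noncomputable def dotForm (F : Type*) [Field F] (n : ℕ) : LinearMap.BilinForm F (Fin n → F) :=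
  LinearMap.mk₂ F dotProduct
    (fun a b c => add_dotProduct a b c)
    (fun r a b => smul_dotProduct r a b)
    (fun a b c => dotProduct_add a b c)
    (fun r a b => dotProduct_smul r a b)

omit [Fintype F] in
lemma dotForm_apply {n : ℕ} (u v : Fin n → F) : dotForm F n u v = dotProduct u v := rfl

omit [Fintype F] in
lemma dotForm_refl {n : ℕ} : (dotForm F n).IsRefl := by
  intro u v h
  rw [dotForm_apply, dotProduct_comm]
  exact h

omit [Fintype F] in
lemma dotForm_nondeg {n : ℕ} : (dotForm F n).Nondegenerate := by
  show LinearMap.Nondegenerate (dotForm F n)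
  rw [LinearMap.IsRefl.nondegenerate_iff_separatingLeft (B := dotForm F n) dotForm_refl]
  intro v hv
  funext i
  simpa [dotForm_apply, dotProduct_single] using hv (Pi.single i 1)

omit [Fintype F] in
lemma mem_dualCode {n : ℕ} {C : Submodule F (Fin n → F)} {u : Fin n → F} :
    u ∈ dualCode C ↔ ∀ c ∈ C, dotProduct u c = 0 := Iff.rfl

omit [Fintype F] in
lemma dualCode_eq_orthogonal {n : ℕ} (C : Submodule F (Fin n → F)) :
    dualCode C = (dotForm F n).orthogonal C := by
  ext u
  rw [mem_dualCode, LinearMap.BilinForm.mem_orthogonal_iff]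
  constructor
  · intro hu c hc
    rw [dotForm_apply, dotProduct_comm]
    exact hu c hc
  · intro hu c hc
    have := hu c hc
    rwa [dotForm_apply, dotProduct_comm] at this

omit [Fintype F] in
lemma dualCode_dualCode {n : ℕ} (C : Submodule F (Fin n → F)) :
    dualCode (dualCode C) = C := by
  rw [dualCode_eq_orthogonal, dualCode_eq_orthogonal,
    LinearMap.BilinForm.orthogonal_orthogonal dotForm_nondeg dotForm_refl]

theorem rank_of_LCP {n k1 k2 m2 : ℕ}
    (C1 C2 : Submodule F (Fin n → F))
    (hk1 : Module.finrank F C1 = k1) (hk2 : Module.finrank F C2 = k2)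
    (hinter : C1 ⊓ C2 = ⊥) (hsum : C1 ⊔ C2 = ⊤)
    (G1 : Matrix (Fin k1) (Fin n) F) (hG1 : IsGenMat C1 G1)
    (H2 : Matrix (Fin m2) (Fin n) F) (hH2 : IsGenMat (dualCode C2) H2) :
    (G1 * H2.transpose).rank = k1 := by
  have hindep : LinearIndependent F (fun i => (G1 * H2.transpose) i) := by
    rw [Fintype.linearIndependent_iff]
    intro g hg
    -- the combination of rows equals `(g ᵥ* G1) ᵥ* H2ᵀ`
    have hg' : Matrix.vecMul (Matrix.vecMul g G1) H2.transpose = 0 := by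
      rw [Matrix.vecMul_vecMul]
      funext j
      have := congrFun hg j
      simpa [Matrix.vecMul, dotProduct, Finset.sum_apply, mul_comm] using this
    set v := Matrix.vecMul g G1 with hv
    -- v ∈ C1
    have hvC1 : v ∈ C1 := by
      rw [← hG1.2]
      have : v = ∑ i, g i • G1 i := by
        funext j
        simp [hv, Matrix.vecMul, dotProduct, Finset.sum_apply]
      rw [this]
      exact Submodule.sum_mem _ fun i _ =>
        Submodule.smul_mem _ _ (Submodule.subset_span ⟨i, rfl⟩)
    -- v ∈ dualCode (dualCode C2) = C2
    have hvC2 : v ∈ C2 := by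
      rw [← dualCode_dualCode C2, mem_dualCode]
      intro c hc
      rw [← hH2.2] at hc
      induction hc using Submodule.span_induction with
      | mem x hx =>
        obtain ⟨j, rfl⟩ := hx
        have := congrFun hg' j
        simpa [Matrix.vecMul, dotProduct, Matrix.transpose, mul_comm] using this
      | zero => simp
      | add x y _ _ hx hy => simp [dotProduct_add, hx, hy]
      | smul r x _ hx => simp [dotProduct_smul, hx]
    have hv0 : v = 0 := by
      have : v ∈ C1 ⊓ C2 := ⟨hvC1, hvC2⟩
      rwa [hinter, Submodule.mem_bot] at this
    -- conclude g = 0 from independence of rows of G1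
    intro i
    have hsum0 : ∑ i, g i • G1 i = 0 := by
      rw [← hv0]
      funext j
      simp [hv, Matrix.vecMul, dotProduct, Finset.sum_apply]
    exact Fintype.linearIndependent_iff.mp hG1.1 g hsum0 i
  have := hindep.rank_matrix
  simpa using this
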